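/- In the one-hidden-layer ReLU ANN setting with constant target α, every continuous gradient flow trajectory Θ : [0,∞) → ℝ^{3H+1} satisfying Θ_t = Θ_0 − ∫_0^t G(Θ_s) ds is uniformly bounded with sup_{t ∈ [0,∞)} ‖Θ_t‖ ≤ (V(Θ_0))^{1/2} < ∞. -/

import Mathlib

open MeasureTheory

noncomputable section

/-- weight parameters -/
def wp (H : ℕ) (φ : EuclideanSpace ℝ (Fin (3*H+1))) (j : Fin H) : ℝ := φ ⟨j.1, by omega⟩
/-- bias parameters -/
def bp (H : ℕ) (φ : EuclideanSpace ℝ (Fin (3*H+1))) (j : Fin H) : ℝ := φ ⟨H + j.1, by omega⟩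
/-- outer weight parameters -/
def vp (H : ℕ) (φ : EuclideanSpace ℝ (Fin (3*H+1))) (j : Fin H) : ℝ := φ ⟨2*H + j.1, by omega⟩
/-- output bias -/
def cp (H : ℕ) (φ : EuclideanSpace ℝ (Fin (3*H+1))) : ℝ := φ ⟨3*H, by omega⟩

/-- realization of the one-hidden-layer ReLU network -/
def realization (H : ℕ) (φ : EuclideanSpace ℝ (Fin (3*H+1))) (x : ℝ) : ℝ :=
  cp H φ + ∑ j : Fin H, vp H φ j * max (wp H φ j * x + bp H φ j) 0

/-- risk with constant target α -/
def risk (H : ℕ) (α : ℝ) (φ : EuclideanSpace ℝ (Fin (3*H+1))) : ℝ :=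
  ∫ y in (0:ℝ)..1, (realization H φ y - α)^2

/-- activity interval I_j^φ -/
def actSet (H : ℕ) (φ : EuclideanSpace ℝ (Fin (3*H+1))) (j : Fin H) : Set ℝ :=
  {x | x ∈ Set.Icc (0:ℝ) 1 ∧ 0 < wp H φ j * x + bp H φ j}

/-- generalized gradient G -/
def grad (H : ℕ) (α : ℝ) (φ : EuclideanSpace ℝ (Fin (3*H+1))) :
    EuclideanSpace ℝ (Fin (3*H+1)) := WithLp.toLp 2 fun (i : Fin (3*H+1)) =>
  if h : i.1 < H then
    2 * vp H φ ⟨i.1, h⟩ * ∫ x in actSet H φ ⟨i.1, h⟩, x * (realization H φ x - α)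
  else if h2 : i.1 < 2*H then
    2 * vp H φ ⟨i.1 - H, by omega⟩ * ∫ x in actSet H φ ⟨i.1 - H, by omega⟩, (realization H φ x - α)
  else if h3 : i.1 < 3*H then
    2 * ∫ x in (0:ℝ)..1,
      max (wp H φ ⟨i.1 - 2*H, by omega⟩ * x + bp H φ ⟨i.1 - 2*H, by omega⟩) 0 * (realization H φ x - α)
  else 2 * ∫ x in (0:ℝ)..1, (realization H φ x - α)

/-- Lyapunov function V -/
def lyap (H : ℕ) (α : ℝ) (φ : EuclideanSpace ℝ (Fin (3*H+1))) : ℝ :=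
  ‖φ‖^2 + (cp H φ - 2*α)^2

set_option maxHeartbeats 1000000

section Aux

variable {H : ℕ} {α : ℝ}

lemma realization_cont (φ : EuclideanSpace ℝ (Fin (3*H+1))) :
    Continuous (fun x => realization H φ x) := by
  unfold realization
  exact continuous_const.add (continuous_finset_sum _ fun j _ =>
    continuous_const.mul (((continuous_const.mul continuous_id).add continuous_const).max
      continuous_const))

lemma err_cont (φ : EuclideanSpace ℝ (Fin (3*H+1))) :
    Continuous (fun x => realization H φ x - α) :=
  (realization_cont φ).sub continuous_const

lemma actSet_subset (φ : EuclideanSpace ℝ (Fin (3*H+1))) (j : Fin H) :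
    actSet H φ j ⊆ Set.Icc 0 1 := fun _ hx => hx.1

lemma meas_actSet (φ : EuclideanSpace ℝ (Fin (3*H+1))) (j : Fin H) :
    MeasurableSet (actSet H φ j) := by
  have : actSet H φ j = Set.Icc 0 1 ∩ {x | 0 < wp H φ j * x + bp H φ j} := rfl
  rw [this]
  exact measurableSet_Icc.inter
    (measurableSet_lt measurable_const (by fun_prop))

lemma integrableOn_actSet (φ : EuclideanSpace ℝ (Fin (3*H+1))) (j : Fin H)
    {g : ℝ → ℝ} (hg : Continuous g) : IntegrableOn g (actSet H φ j) := by
  exact ((hg.continuousOn.integrableOn_compact isCompact_Icc).mono_set (actSet_subset φ j))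

lemma act_integral (φ : EuclideanSpace ℝ (Fin (3*H+1))) (j : Fin H) :
    ∫ x in actSet H φ j, (wp H φ j * x + bp H φ j) * (realization H φ x - α)
      = ∫ x in (0:ℝ)..1, max (wp H φ j * x + bp H φ j) 0 * (realization H φ x - α) := by
  rw [intervalIntegral.integral_of_le zero_le_one, ← integral_Icc_eq_integral_Ioc,
    ← Set.inter_eq_self_of_subset_right (actSet_subset φ j),
    ← setIntegral_indicator (meas_actSet φ j)]
  refine setIntegral_congr_fun measurableSet_Icc fun x hx => ?_
  by_cases h : 0 < wp H φ j * x + bp H φ j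
  · rw [Set.indicator_of_mem (show x ∈ actSet H φ j from ⟨hx, h⟩), max_eq_left h.le]
  · rw [Set.indicator_of_notMem (fun hmem => h hmem.2), max_eq_right (not_lt.1 h), zero_mul]

lemma grad_at_w (φ : EuclideanSpace ℝ (Fin (3*H+1))) (j : Fin H) :
    grad H α φ ⟨j.1, by omega⟩
      = 2 * vp H φ j * ∫ x in actSet H φ j, x * (realization H φ x - α) := by
  simp [grad, j.2]

lemma grad_at_b (φ : EuclideanSpace ℝ (Fin (3*H+1))) (j : Fin H) :
    grad H α φ ⟨H + j.1, by omega⟩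
      = 2 * vp H φ j * ∫ x in actSet H φ j, (realization H φ x - α) := by
  have h1 : ¬ (H + j.1 < H) := by omega
  have h2 : H + j.1 < 2*H := by have := j.2; omega
  have h3 : H + j.1 - H = j.1 := by omega
  simp [grad, h1, h2, h3]

lemma grad_at_v (φ : EuclideanSpace ℝ (Fin (3*H+1))) (j : Fin H) :
    grad H α φ ⟨2*H + j.1, by omega⟩
      = 2 * ∫ x in (0:ℝ)..1,
          max (wp H φ j * x + bp H φ j) 0 * (realization H φ x - α) := by
  have h1 : ¬ (2*H + j.1 < H) := by omega
  have h2 : ¬ (2*H + j.1 < 2*H) := by omega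
  have h3 : 2*H + j.1 < 3*H := by have := j.2; omega
  have h4 : 2*H + j.1 - 2*H = j.1 := by omega
  simp [grad, h1, h2, h3, h4]

lemma grad_at_c (φ : EuclideanSpace ℝ (Fin (3*H+1))) :
    grad H α φ ⟨3*H, by omega⟩ = 2 * ∫ x in (0:ℝ)..1, (realization H φ x - α) := by
  have h1 : ¬ (3*H < H) := by omega
  have h2 : ¬ (3*H < 2*H) := by omega
  have h3 : ¬ (3*H < 3*H) := by omega
  simp [grad, h1, h2, h3]

lemma sum_split (F : Fin (3*H+1) → ℝ) :
    ∑ i, F i = (∑ j : Fin H, (F ⟨j.1, by omega⟩ + F ⟨H + j.1, by omega⟩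
        + F ⟨2*H + j.1, by omega⟩)) + F ⟨3*H, by omega⟩ := by
  classical
  set g : ℕ → ℝ := fun n => if h : n < 3*H+1 then F ⟨n, h⟩ else 0 with hg
  have h1 : ∑ i, F i = ∑ i ∈ Finset.range (3*H+1), g i := by
    rw [← Fin.sum_univ_eq_sum_range g]
    refine Finset.sum_congr rfl fun i _ => ?_
    have hi : (i : ℕ) < 3*H+1 := i.2
    simp [hg, hi, Nat.le_of_lt_succ hi, Nat.not_lt.mpr (Nat.le_of_lt_succ hi)]
  rw [h1, Finset.sum_range_succ]
  have h3 : 3*H = H + (H + H) := by ring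
  conv_lhs => rw [h3, Finset.sum_range_add, Finset.sum_range_add]
  have e1 : ∑ x ∈ Finset.range H, g x = ∑ j : Fin H, F ⟨j.1, by omega⟩ := by
    rw [← Fin.sum_univ_eq_sum_range (fun n => g n) H]
    refine Finset.sum_congr rfl fun j _ => ?_
    have hj : (j : ℕ) < 3*H+1 := by have := j.2; omega
    simp [hg, hj, Nat.le_of_lt_succ hj, Nat.not_lt.mpr (Nat.le_of_lt_succ hj)]
  have e2 : ∑ x ∈ Finset.range H, g (H + x) = ∑ j : Fin H, F ⟨H + j.1, by omega⟩ := by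
    rw [← Fin.sum_univ_eq_sum_range (fun n => g (H + n)) H]
    refine Finset.sum_congr rfl fun j _ => ?_
    have hj : H + (j : ℕ) < 3*H+1 := by have := j.2; omega
    simp [hg, hj, Nat.le_of_lt_succ hj, Nat.not_lt.mpr (Nat.le_of_lt_succ hj)]
  have e3 : ∑ x ∈ Finset.range H, g (H + (H + x)) = ∑ j : Fin H, F ⟨2*H + j.1, by omega⟩ := by
    rw [← Fin.sum_univ_eq_sum_range (fun n => g (H + (H + n))) H]
    refine Finset.sum_congr rfl fun j _ => ?_
    have hj' : H + (H + (j : ℕ)) = 2*H + j.1 := by ring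
    rw [hj']
    have hj : 2*H + (j : ℕ) < 3*H+1 := by have := j.2; omega
    simp [hg, hj, Nat.le_of_lt_succ hj, Nat.not_lt.mpr (Nat.le_of_lt_succ hj)]
  have e4 : g (H + (H + H)) = F ⟨3*H, by omega⟩ := by
    have hj' : H + (H + H) = 3*H := by ring
    rw [hj']
    have hj : 3*H < 3*H+1 := by omega
    simp [hg, hj]
  rw [e1, e2, e3, e4, ← Finset.sum_add_distrib, ← Finset.sum_add_distrib]
  simp [add_assoc]

lemma key_identity (φ : EuclideanSpace ℝ (Fin (3*H+1))) :
    (inner ℝ φ (grad H α φ) : ℝ) + (cp H φ - 2*α) * grad H α φ ⟨3*H, by omega⟩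
      = 4 * ∫ y in (0:ℝ)..1, (realization H φ y - α)^2 := by
  have hcont : Continuous (fun x => realization H φ x - α) := err_cont φ
  have hmax : ∀ j : Fin H, Continuous
      (fun x => max (wp H φ j * x + bp H φ j) 0 * (realization H φ x - α)) := fun j =>
    (((continuous_const.mul continuous_id).add continuous_const).max continuous_const).mul hcont
  rw [PiLp.inner_apply]
  simp only [RCLike.inner_apply, conj_trivial]
  rw [show ∑ x, (grad H α φ).ofLp x * φ.ofLp x = ∑ i, φ i * grad H α φ i from
    Finset.sum_congr rfl fun i _ => mul_comm _ _]
  rw [sum_split (fun i => φ i * grad H α φ i)]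
  have hblock : ∀ j : Fin H,
      φ ⟨j.1, by omega⟩ * grad H α φ ⟨j.1, by omega⟩
        + φ ⟨H + j.1, by omega⟩ * grad H α φ ⟨H + j.1, by omega⟩
        + φ ⟨2*H + j.1, by omega⟩ * grad H α φ ⟨2*H + j.1, by omega⟩
      = 4 * (vp H φ j * ∫ x in (0:ℝ)..1,
          max (wp H φ j * x + bp H φ j) 0 * (realization H φ x - α)) := by
    intro j
    rw [grad_at_w, grad_at_b, grad_at_v]
    have hw : φ (⟨j.1, by omega⟩ : Fin (3*H+1)) = wp H φ j := rfl
    have hb : φ (⟨H + j.1, by omega⟩ : Fin (3*H+1)) = bp H φ j := rfl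
    have hv : φ (⟨2*H + j.1, by omega⟩ : Fin (3*H+1)) = vp H φ j := rfl
    rw [hw, hb, hv]
    have hx : IntegrableOn (fun x => x * (realization H φ x - α)) (actSet H φ j) :=
      integrableOn_actSet φ j (continuous_id.mul hcont)
    have he : IntegrableOn (fun x => realization H φ x - α) (actSet H φ j) :=
      integrableOn_actSet φ j hcont
    have hsum : wp H φ j * (∫ x in actSet H φ j, x * (realization H φ x - α))
        + bp H φ j * (∫ x in actSet H φ j, (realization H φ x - α))
        = ∫ x in actSet H φ j, (wp H φ j * x + bp H φ j) * (realization H φ x - α) := by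
      rw [← integral_const_mul, ← integral_const_mul,
        ← integral_add (hx.const_mul _) (he.const_mul _)]
      simp_rw [show ∀ x : ℝ, wp H φ j * (x * (realization H φ x - α))
        + bp H φ j * (realization H φ x - α)
        = (wp H φ j * x + bp H φ j) * (realization H φ x - α) from fun x => by ring]
    rw [act_integral] at hsum
    linear_combination (2 * vp H φ j) * hsum
  rw [Finset.sum_congr rfl (fun j _ => hblock j)]
  have hsum2 : ∑ j : Fin H, 4 * (vp H φ j * ∫ x in (0:ℝ)..1,
      max (wp H φ j * x + bp H φ j) 0 * (realization H φ x - α))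
      = 4 * ∫ y in (0:ℝ)..1, (realization H φ y - cp H φ) * (realization H φ y - α) := by
    rw [← Finset.mul_sum]
    congr 1
    simp_rw [← intervalIntegral.integral_const_mul]
    rw [← intervalIntegral.integral_finset_sum (fun j _ =>
      ((hmax j).intervalIntegrable 0 1).const_mul _)]
    refine intervalIntegral.integral_congr fun x _ => ?_
    have hNc : realization H φ x - cp H φ
        = ∑ j : Fin H, vp H φ j * max (wp H φ j * x + bp H φ j) 0 := by
      simp [realization]
    rw [hNc, Finset.sum_mul]
    exact Finset.sum_congr rfl fun j _ => (mul_assoc _ _ _).symm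
  rw [hsum2]
  have hc : φ (⟨3*H, by omega⟩ : Fin (3*H+1)) = cp H φ := rfl
  rw [hc, grad_at_c]
  have expand : ∫ y in (0:ℝ)..1, (realization H φ y - cp H φ) * (realization H φ y - α)
      = (∫ y in (0:ℝ)..1, (realization H φ y - α)^2)
        + (α - cp H φ) * ∫ y in (0:ℝ)..1, (realization H φ y - α) := by
    rw [← intervalIntegral.integral_const_mul,
      ← intervalIntegral.integral_add (f := fun x => (realization H φ x - α)^2) (((hcont.pow 2).intervalIntegrable 0 1))
        ((hcont.intervalIntegrable 0 1).const_mul _)]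
    refine intervalIntegral.integral_congr fun x _ => ?_
    ring
  rw [expand]
  ring

lemma key_nonneg (φ : EuclideanSpace ℝ (Fin (3*H+1))) :
    0 ≤ (inner ℝ φ (grad H α φ) : ℝ) + (cp H φ - 2*α) * grad H α φ ⟨3*H, by omega⟩ := by
  rw [key_identity]
  have : 0 ≤ ∫ y in (0:ℝ)..1, (realization H φ y - α)^2 :=
    intervalIntegral.integral_nonneg zero_le_one (fun x _ => sq_nonneg _)
  linarith

end Aux

section Induction

/-- Continuous induction: if increments of `g` are quadratically controlled by increments of
a continuous monotone `u`, then `g` does not increase. -/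
lemma le_of_sq_increments {g u : ℝ → ℝ} {a b C : ℝ} (hab : a ≤ b) (hC : 0 ≤ C)
    (hg : ContinuousOn g (Set.Icc a b)) (hu : ContinuousOn u (Set.Icc a b))
    (humono : MonotoneOn u (Set.Icc a b))
    (h : ∀ s ∈ Set.Icc a b, ∀ t ∈ Set.Icc a b, s ≤ t → g t - g s ≤ C * (u t - u s)^2) :
    g b ≤ g a := by
  have hbmem : b ∈ Set.Icc a b := ⟨hab, le_rfl⟩
  have hamem : a ∈ Set.Icc a b := ⟨le_rfl, hab⟩
  have key : ∀ ε > (0:ℝ), g b - g a ≤ ε * (u b - u a) := by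
    intro ε hε
    set S := Set.Icc a b ∩ {r : ℝ | g r - g a - ε * (u r - u a) ≤ 0} with hS
    have haS : a ∈ S := ⟨hamem, by simp⟩
    have hne : S.Nonempty := ⟨a, haS⟩
    have hbdd : BddAbove S := ⟨b, fun r hr => hr.1.2⟩
    have hclosed : IsClosed S := by
      have : S = Set.Icc a b ∩ (fun r => g r - g a - ε * (u r - u a)) ⁻¹' (Set.Iic 0) := rfl
      rw [this]
      exact ContinuousOn.preimage_isClosed_of_isClosed
        (((hg.sub continuousOn_const).sub (continuousOn_const.mul
          (hu.sub continuousOn_const)))) isClosed_Icc isClosed_Iic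
    have hmem : sSup S ∈ S := hclosed.csSup_mem hne hbdd
    set r₀ := sSup S with hr₀
    have hr₀b : r₀ ≤ b := hmem.1.2
    rcases eq_or_lt_of_le hr₀b with heq | hlt
    · have := hmem.2
      simp only [Set.mem_setOf_eq] at this
      rw [heq] at this
      linarith
    · exfalso
      -- find a slightly larger point still in S
      set ε' := ε / (C + 1) with hε'
      have hε'pos : 0 < ε' := div_pos hε (by linarith)
      have hCε' : C * ε' ≤ ε := by
        rw [hε', mul_div_assoc', div_le_iff₀ (by linarith : (0:ℝ) < C + 1)]
        nlinarith
      have hr₀mem : r₀ ∈ Set.Icc a b := hmem.1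
      have hucont : ContinuousWithinAt u (Set.Icc a b) r₀ := hu r₀ hr₀mem
      rw [Metric.continuousWithinAt_iff] at hucont
      obtain ⟨δ, hδpos, hδ⟩ := hucont ε' hε'pos
      set r₁ := min b (r₀ + δ/2) with hr₁
      have hr₀r₁ : r₀ < r₁ := lt_min hlt (by linarith)
      have hr₁mem : r₁ ∈ Set.Icc a b := ⟨le_trans hr₀mem.1 hr₀r₁.le, min_le_left _ _⟩
      have hd : dist r₁ r₀ < δ := by
        rw [Real.dist_eq, abs_of_nonneg (by linarith : (0:ℝ) ≤ r₁ - r₀)]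
        have : r₁ ≤ r₀ + δ/2 := min_le_right _ _
        linarith
      have hu1 : |u r₁ - u r₀| < ε' := by
        have := hδ hr₁mem hd
        rwa [Real.dist_eq] at this
      have hud : 0 ≤ u r₁ - u r₀ := sub_nonneg.2 (humono hr₀mem hr₁mem hr₀r₁.le)
      have hud' : u r₁ - u r₀ < ε' := lt_of_abs_lt hu1
      have hstep : g r₁ - g r₀ ≤ C * (u r₁ - u r₀)^2 := h r₀ hr₀mem r₁ hr₁mem hr₀r₁.le
      have hquad : C * (u r₁ - u r₀)^2 ≤ ε * (u r₁ - u r₀) := by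
        nlinarith [mul_nonneg (mul_nonneg hC hud) (sub_nonneg.2 hud'.le)]
      have hprev : g r₀ - g a - ε * (u r₀ - u a) ≤ 0 := hmem.2
      have hr₁S : r₁ ∈ S := by
        refine ⟨hr₁mem, ?_⟩
        simp only [Set.mem_setOf_eq]
        linarith
      exact absurd (le_csSup hbdd hr₁S) (not_le.2 hr₀r₁)
  have huab : 0 ≤ u b - u a := sub_nonneg.2 (humono hamem hbmem hab)
  by_contra hcon
  push_neg at hcon
  have hpos : 0 < g b - g a := by linarith
  have := key ((g b - g a) / (2 * (u b - u a) + 2)) (by positivity)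
  have h2 : (g b - g a) / (2 * (u b - u a) + 2) * (u b - u a) < g b - g a := by
    rw [div_mul_eq_mul_div, div_lt_iff₀ (by linarith)]
    nlinarith
  linarith

end Induction

section Main

variable {H : ℕ} {α : ℝ}

lemma abs_coord_le {n : ℕ} (ψ : EuclideanSpace ℝ (Fin n)) (i : Fin n) : |ψ i| ≤ ‖ψ‖ := by
  rw [EuclideanSpace.norm_eq]
  have h1 : |ψ i| = Real.sqrt (‖ψ i‖^2) := by
    rw [Real.sqrt_sq_eq_abs, Real.norm_eq_abs, abs_abs]
  rw [h1]
  exact Real.sqrt_le_sqrt (Finset.single_le_sum (f := fun j => ‖ψ j‖^2)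
    (fun j _ => sq_nonneg _) (Finset.mem_univ i))

/-- index of the output bias -/
def cIdx (H : ℕ) : Fin (3*H+1) := ⟨3*H, by omega⟩

lemma cp_eq (ψ : EuclideanSpace ℝ (Fin (3*H+1))) : cp H ψ = ψ (cIdx H) := rfl

lemma cp_sub (ψ χ : EuclideanSpace ℝ (Fin (3*H+1))) : cp H (ψ - χ) = cp H ψ - cp H χ := by
  simp [cp_eq, PiLp.sub_apply]

lemma abs_cp_le (ψ : EuclideanSpace ℝ (Fin (3*H+1))) : |cp H ψ| ≤ ‖ψ‖ :=
  abs_coord_le ψ ⟨3*H, by omega⟩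

lemma key_nonneg' (φ : EuclideanSpace ℝ (Fin (3*H+1))) :
    0 ≤ (inner ℝ φ (grad H α φ) : ℝ) + (cp H φ - 2*α) * cp H (grad H α φ) := by
  have h : cp H (grad H α φ) = grad H α φ ⟨3*H, by omega⟩ := rfl
  rw [h]
  exact key_nonneg φ

lemma cp_proj (ψ : EuclideanSpace ℝ (Fin (3*H+1))) :
    cp H ψ = PiLp.proj (p := 2) (𝕜 := ℝ) (β := fun _ : Fin (3*H+1) => ℝ) (cIdx H) ψ := by
  simp [cp_eq, PiLp.proj_apply]

theorem flow_uniformly_bounded' (H : ℕ) (hH : 0 < H) (α : ℝ)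
    (Θ : ℝ → EuclideanSpace ℝ (Fin (3*H+1)))
    (hΘcont : ContinuousOn Θ (Set.Ici 0))
    (hflow : ∀ t ∈ Set.Ici (0:ℝ), Θ t = Θ 0 - ∫ s in (0:ℝ)..t, grad H α (Θ s)) :
    ∀ t ∈ Set.Ici (0:ℝ), ‖Θ t‖ ≤ Real.sqrt (lyap H α (Θ 0)) := by
  intro t ht
  have ht0 : (0:ℝ) ≤ t := ht
  have hlyap_nonneg : 0 ≤ lyap H α (Θ 0) := by unfold lyap; positivity
  have hfinal : ∀ ψ : EuclideanSpace ℝ (Fin (3*H+1)), lyap H α ψ ≤ lyap H α (Θ 0) →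
      ‖ψ‖ ≤ Real.sqrt (lyap H α (Θ 0)) := by
    intro ψ hψ
    rw [Real.le_sqrt (norm_nonneg _) hlyap_nonneg]
    have : ‖ψ‖^2 ≤ lyap H α ψ := by unfold lyap; nlinarith [sq_nonneg (cp H ψ - 2*α)]
    linarith
  set f : ℝ → EuclideanSpace ℝ (Fin (3*H+1)) := fun s => grad H α (Θ s) with hf
  by_cases hint : IntervalIntegrable f volume 0 t
  · -- main case
    have hsub : ∀ u v : ℝ, u ∈ Set.Icc 0 t → v ∈ Set.Icc 0 t →
        IntervalIntegrable f volume u v := by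
      intro u v hu hv
      refine hint.mono_set ?_
      exact Set.uIcc_subset_uIcc (by rw [Set.uIcc_of_le ht0]; exact hu)
        (by rw [Set.uIcc_of_le ht0]; exact hv)
    set U : ℝ → ℝ := fun r => ∫ s in (0:ℝ)..r, ‖f s‖ with hU
    have h0t : (0:ℝ) ∈ Set.Icc (0:ℝ) t := ⟨le_rfl, ht0⟩
    have hUdiff : ∀ u ∈ Set.Icc (0:ℝ) t, ∀ v ∈ Set.Icc (0:ℝ) t,
        U v - U u = ∫ s in u..v, ‖f s‖ := by
      intro u hu v hv
      have := intervalIntegral.integral_add_adjacent_intervals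
        ((hsub 0 u h0t hu).norm) ((hsub u v hu hv).norm)
      simp only [hU]
      linarith
    have hUmono : MonotoneOn U (Set.Icc 0 t) := by
      intro u hu v hv huv
      have h1 := hUdiff u hu v hv
      have h2 : 0 ≤ ∫ s in u..v, ‖f s‖ :=
        intervalIntegral.integral_nonneg huv (fun x _ => norm_nonneg _)
      linarith
    have hUcont : ContinuousOn U (Set.Icc 0 t) := by
      have h1 : IntegrableOn (fun s => ‖f s‖) (Set.uIcc 0 t) volume := by
        rw [Set.uIcc_of_le ht0, integrableOn_Icc_iff_integrableOn_Ioc]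
        exact hint.norm.1
      have := intervalIntegral.continuousOn_primitive_interval h1
      rwa [Set.uIcc_of_le ht0] at this
    have hΘdiff : ∀ u ∈ Set.Icc (0:ℝ) t, ∀ v ∈ Set.Icc (0:ℝ) t,
        Θ v = Θ u - ∫ s in u..v, f s := by
      intro u hu v hv
      have hadd := intervalIntegral.integral_add_adjacent_intervals
        (hsub 0 u h0t hu) (hsub u v hu hv)
      rw [hflow v (Set.mem_Ici.mpr hv.1), hflow u (Set.mem_Ici.mpr hu.1), ← hadd]
      abel
    have hnormdiff : ∀ u ∈ Set.Icc (0:ℝ) t, ∀ v ∈ Set.Icc (0:ℝ) t, u ≤ v →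
        ‖Θ v - Θ u‖ ≤ U v - U u := by
      intro u hu v hv huv
      rw [hΘdiff u hu v hv, hUdiff u hu v hv]
      have h1 : Θ u - (∫ s in u..v, f s) - Θ u = -(∫ s in u..v, f s) := by abel
      rw [h1, norm_neg]
      exact intervalIntegral.norm_integral_le_integral_norm huv
    have hinc : ∀ s ∈ Set.Icc (0:ℝ) t, ∀ r ∈ Set.Icc (0:ℝ) t, s ≤ r →
        lyap H α (Θ r) - lyap H α (Θ s) ≤ 6 * (U r - U s)^2 := by
      intro s hs r hr hsr
      set D := ∫ u in s..r, f u with hD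
      have hTr : Θ r = Θ s - D := hΘdiff s hs r hr
      have hUd := hUdiff s hs r hr
      have hΔU : ‖D‖ ≤ U r - U s := by
        rw [hUd]; exact intervalIntegral.norm_integral_le_integral_norm hsr
      have hΔU0 : 0 ≤ U r - U s := le_trans (norm_nonneg _) hΔU
      have hDc : |cp H D| ≤ U r - U s := le_trans (abs_cp_le D) hΔU
      have hW : lyap H α (Θ r) - lyap H α (Θ s)
          = -2 * (inner ℝ (Θ s) D : ℝ) - 2 * (cp H (Θ s) - 2*α) * cp H D
            + ‖D‖^2 + (cp H D)^2 := by
        unfold lyap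
        rw [hTr, norm_sub_sq_real, cp_sub]
        ring
      have h1 : IntervalIntegrable (fun u => (inner ℝ (Θ s) (f u) : ℝ)) volume s r := by
        constructor
        · have := (innerSL ℝ (Θ s)).integrable_comp (hsub s r hs hr).1
          simpa [innerSL_apply_apply, IntegrableOn] using this
        · have := (innerSL ℝ (Θ s)).integrable_comp (hsub s r hs hr).2
          simpa [innerSL_apply_apply, IntegrableOn] using this
      have h2 : IntervalIntegrable (fun u => cp H (f u)) volume s r := by
        simp only [cp_eq]
        constructor
        · have := (PiLp.proj (p := 2) (𝕜 := ℝ) (β := fun _ : Fin (3*H+1) => ℝ)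
            (cIdx H)).integrable_comp (hsub s r hs hr).1
          simpa [PiLp.proj_apply, IntegrableOn] using this
        · have := (PiLp.proj (p := 2) (𝕜 := ℝ) (β := fun _ : Fin (3*H+1) => ℝ)
            (cIdx H)).integrable_comp (hsub s r hs hr).2
          simpa [PiLp.proj_apply, IntegrableOn] using this
      have hinner : (inner ℝ (Θ s) D : ℝ) = ∫ u in s..r, (inner ℝ (Θ s) (f u) : ℝ) := by
        have := ContinuousLinearMap.intervalIntegral_comp_comm (innerSL ℝ (Θ s))
          (hsub s r hs hr)
        simpa [innerSL_apply_apply, hD] using this.symm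
      have hcoord : cp H D = ∫ u in s..r, cp H (f u) := by
        have := ContinuousLinearMap.intervalIntegral_comp_comm
          (PiLp.proj (p := 2) (𝕜 := ℝ) (β := fun _ : Fin (3*H+1) => ℝ) (cIdx H))
          (hsub s r hs hr)
        simp only [PiLp.proj_apply] at this
        simp only [cp_eq, hD]
        exact this.symm
      have hintegrand : IntervalIntegrable
          (fun u => -2 * (inner ℝ (Θ s) (f u) : ℝ) - 2 * (cp H (Θ s) - 2*α) * cp H (f u))
          volume s r :=
        (h1.const_mul (-2)).sub (h2.const_mul (2 * (cp H (Θ s) - 2*α)))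
      have hbound : ∀ u ∈ Set.Icc s r,
          -2 * (inner ℝ (Θ s) (f u) : ℝ) - 2 * (cp H (Θ s) - 2*α) * cp H (f u)
            ≤ 4 * (U r - U s) * ‖f u‖ := by
        intro u hu
        have hu' : u ∈ Set.Icc (0:ℝ) t := ⟨le_trans hs.1 hu.1, le_trans hu.2 hr.2⟩
        have hkey : 0 ≤ (inner ℝ (Θ u) (f u) : ℝ) + (cp H (Θ u) - 2*α) * cp H (f u) :=
          key_nonneg' (Θ u)
        have hΘus : ‖Θ u - Θ s‖ ≤ U r - U s := by
          have hm := hUmono hu' hr hu.2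
          have := hnormdiff s hs u hu' hu.1
          linarith
        have hcs : |cp H (Θ u) - cp H (Θ s)| ≤ ‖Θ u - Θ s‖ := by
          rw [← cp_sub]; exact abs_cp_le _
        have hfc : |cp H (f u)| ≤ ‖f u‖ := abs_cp_le _
        have e2 : (inner ℝ (Θ u - Θ s) (f u) : ℝ) ≤ ‖Θ u - Θ s‖ * ‖f u‖ := real_inner_le_norm _ _
        have e1 : (cp H (Θ u) - cp H (Θ s)) * cp H (f u) ≤ ‖Θ u - Θ s‖ * ‖f u‖ :=
          le_trans (le_trans (le_abs_self _) (abs_mul _ _).le)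
            (mul_le_mul hcs hfc (abs_nonneg _) (norm_nonneg _))
        have e3 : ‖Θ u - Θ s‖ * ‖f u‖ ≤ (U r - U s) * ‖f u‖ :=
          mul_le_mul_of_nonneg_right hΘus (norm_nonneg _)
        have hid : -2 * (inner ℝ (Θ s) (f u) : ℝ) - 2 * (cp H (Θ s) - 2*α) * cp H (f u)
            = -2 * ((inner ℝ (Θ u) (f u) : ℝ) + (cp H (Θ u) - 2*α) * cp H (f u))
              + 2 * (inner ℝ (Θ u - Θ s) (f u) : ℝ)
              + 2 * ((cp H (Θ u) - cp H (Θ s)) * cp H (f u)) := by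
          rw [inner_sub_left]
          push_cast
          ring
        rw [hid]
        linarith
      have hintRHS : IntervalIntegrable (fun u => 4 * (U r - U s) * ‖f u‖) volume s r := by
        have := (hsub s r hs hr).norm.const_mul (4 * (U r - U s))
        simpa [mul_assoc] using this
      have hmono := intervalIntegral.integral_mono_on hsr hintegrand hintRHS hbound
      have hsplitint : ∫ u in s..r,
          (-2 * (inner ℝ (Θ s) (f u) : ℝ) - 2 * (cp H (Θ s) - 2*α) * cp H (f u))
          = -2 * (inner ℝ (Θ s) D : ℝ) - 2 * (cp H (Θ s) - 2*α) * cp H D := by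
        rw [intervalIntegral.integral_sub (h1.const_mul (-2))
            (h2.const_mul (2 * (cp H (Θ s) - 2*α))),
          intervalIntegral.integral_const_mul, intervalIntegral.integral_const_mul,
          ← hinner, ← hcoord]
      have hRHSval : ∫ u in s..r, 4 * (U r - U s) * ‖f u‖
          = 4 * (U r - U s) * (U r - U s) := by
        have h4 : (fun u => 4 * (U r - U s) * ‖f u‖) = fun u => (4 * (U r - U s)) * ‖f u‖ := by
          funext u; ring
        rw [h4, intervalIntegral.integral_const_mul, ← hUd]
      rw [hsplitint, hRHSval] at hmono
      have hDc2 : (cp H D)^2 ≤ (U r - U s)^2 := by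
        have := abs_le.1 hDc
        exact sq_le_sq' (by linarith) (by linarith)
      have hD2 : ‖D‖^2 ≤ (U r - U s)^2 := by nlinarith [norm_nonneg D]
      rw [hW]
      nlinarith
    have hWcont : ContinuousOn (fun r => lyap H α (Θ r)) (Set.Icc 0 t) := by
      have hl : Continuous (fun ψ : EuclideanSpace ℝ (Fin (3*H+1)) => lyap H α ψ) := by
        unfold lyap
        have hcp : Continuous (fun ψ : EuclideanSpace ℝ (Fin (3*H+1)) => cp H ψ) := by
          have : (fun ψ : EuclideanSpace ℝ (Fin (3*H+1)) => cp H ψ)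
              = fun ψ => PiLp.proj (p := 2) (𝕜 := ℝ) (β := fun _ : Fin (3*H+1) => ℝ)
                (cIdx H) ψ := by
            funext ψ; exact cp_proj ψ
          rw [this]
          exact (PiLp.proj (p := 2) (𝕜 := ℝ) (β := fun _ : Fin (3*H+1) => ℝ) (cIdx H)).continuous
        exact ((continuous_norm.pow 2)).add ((hcp.sub continuous_const).pow 2)
      exact hl.comp_continuousOn (hΘcont.mono Set.Icc_subset_Ici_self)
    have hfin := le_of_sq_increments ht0 (by norm_num : (0:ℝ) ≤ 6) hWcont hUcont hUmono hinc
    exact hfinal _ hfin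
  · have h0 : ∫ s in (0:ℝ)..t, f s = 0 := intervalIntegral.integral_undef hint
    have hTt : Θ t = Θ 0 := by rw [hflow t ht, h0, sub_zero]
    rw [hTt]
    exact hfinal _ le_rfl

end Main

theorem flow_uniformly_bounded (H : ℕ) (hH : 0 < H) (α : ℝ)
    (Θ : ℝ → EuclideanSpace ℝ (Fin (3*H+1)))
    (hΘcont : ContinuousOn Θ (Set.Ici 0))
    (hflow : ∀ t ∈ Set.Ici (0:ℝ), Θ t = Θ 0 - ∫ s in (0:ℝ)..t, grad H α (Θ s)) :
    ∀ t ∈ Set.Ici (0:ℝ), ‖Θ t‖ ≤ Real.sqrt (lyap H α (Θ 0)) :=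
  flow_uniformly_bounded' H hH α Θ hΘcont hflow
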